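/- Σ_{δ ∈ D_{2n}} ∏_{i=1}^n q^{d_i(δ) − 2i} [d_i(δ) − 2i + 1]_q = ∏_{k=1}^n [2k−1]_q, where D_{2n} is the set of Dyck paths of length 2n, d_i(δ) is the position of the i-th down step of δ, and [m]_q = 1+q+...+q^{m-1}. -/

import Mathlib

open Finset

/-- Steps of a Motzkin path: up, level, down. -/
inductive Step | U | L | D
deriving DecidableEq

instance instFintypeStep : Fintype Step where
  elems := {Step.U, Step.L, Step.D}
  complete := by intro x; cases x <;> simp

/-- `μ` is a Motzkin path: every prefix has at least as many `U`'s as `D`'s, and the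
total numbers of `U`'s and `D`'s agree. -/
def IsMotzkin {n : ℕ} (μ : Fin n → Step) : Prop :=
  (∀ k : Fin n, (Finset.univ.filter (fun j => j ≤ k ∧ μ j = Step.D)).card
      ≤ (Finset.univ.filter (fun j => j ≤ k ∧ μ j = Step.U)).card)
  ∧ (Finset.univ.filter (fun j => μ j = Step.U)).card
    = (Finset.univ.filter (fun j => μ j = Step.D)).card

/-- The height of the `i`-th step of `μ`: the larger of the two `y`-coordinates of
the step, i.e. `#{j ≤ i : μ j = U} − #{j < i : μ j = D}`. -/
def height {n : ℕ} (μ : Fin n → Step) (i : Fin n) : ℕ :=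
  (Finset.univ.filter (fun j => j ≤ i ∧ μ j = Step.U)).card
    - (Finset.univ.filter (fun j => j < i ∧ μ j = Step.D)).card

/-- Biane's word of an involution: `U` if `i < σ i`, `L` if `i = σ i`, `D` if `i > σ i`. -/
def bpath {n : ℕ} (σ : Equiv.Perm (Fin n)) (i : Fin n) : Step :=
  if i < σ i then Step.U else if σ i = i then Step.L else Step.D

/-- Biane's label of step `i`: `|{j ≥ i : σ j ≤ σ i}|`. -/
def blabel {n : ℕ} (σ : Equiv.Perm (Fin n)) (i : Fin n) : ℕ :=
  (Finset.univ.filter (fun j => i ≤ j ∧ σ j ≤ σ i)).card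

open scoped Classical
open Polynomial

/-- `μ` is a Dyck path: a Motzkin path with no level steps. -/
def IsDyck {n : ℕ} (μ : Fin n → Step) : Prop :=
  IsMotzkin μ ∧ ∀ i, μ i ≠ Step.L

/-- The (1-indexed) position of the `(i+1)`-st down step of `δ`. -/
def dpos {n : ℕ} (δ : Fin n → Step) (i : ℕ) : ℕ :=
  (((Finset.univ.filter (fun j => δ j = Step.D)).sort (· ≤ ·)).map
    (fun j => (j : ℕ) + 1)).getD i 0

/-- The `q`-integer `[m]_q = 1 + q + ⋯ + q^{m-1}`. -/
noncomputable def qint (m : ℕ) : Polynomial ℤ := ∑ i ∈ Finset.range m, X ^ i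

namespace Watson

lemma qint_zero : qint 0 = 0 := by simp [qint]
lemma qint_one : qint 1 = 1 := by simp [qint]

lemma qint_succ (n : ℕ) : qint (n + 1) = qint n + X ^ n := by
  simp [qint, Finset.sum_range_succ]

lemma qint_add (a b : ℕ) : qint (a + b) = qint a + X ^ a * qint b := by
  induction b with
  | zero => simp [qint_zero]
  | succ b ih =>
      rw [← Nat.add_assoc, qint_succ, ih, qint_succ]
      rw [pow_add]
      ring

noncomputable def F : ℕ → ℕ → Polynomial ℤ
  | 0, h => if h = 0 then 1 else 0
  | (m+1), h => F m (h+1) + X ^ (h-1) * qint h * F m (h-1)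

def tri : ℕ → ℕ
  | 0 => 0
  | (h+1) => tri h + h

noncomputable def G (h t : ℕ) : Polynomial ℤ :=
  if h = 0 then ∏ k ∈ range t, qint (2*k+1)
  else X ^ (tri h) * ((∏ k ∈ range t, qint (2*k+3)) * ∏ j ∈ range (h-1), qint (2*t+2+j))

lemma F_eq_zero : ∀ m h, (¬ ∃ t, m = h + 2*t) → F m h = 0 := by
  intro m
  induction m with
  | zero =>
      intro h hne
      have : h ≠ 0 := by rintro rfl; exact hne ⟨0, rfl⟩
      simp [F, this]
  | succ m ih =>
      intro h hne
      have h1 : F m (h+1) = 0 := by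
        apply ih; rintro ⟨t, rfl⟩; exact hne ⟨t+1, by ring⟩
      rcases Nat.eq_zero_or_pos h with rfl | hp
      · simp [F, h1, qint_zero]
      · obtain ⟨h', rfl⟩ := Nat.exists_eq_add_of_lt hp
        have h2 : F m (0 + h') = 0 := by
          apply ih; rintro ⟨t, rfl⟩; exact hne ⟨t, by ring⟩
        simp only [F, h1]
        rw [show 0 + h' + 1 - 1 = 0 + h' from by omega]
        rw [h2]
        ring

lemma prod_shift (t : ℕ) :
    ∏ k ∈ range (t+1), qint (2*k+1) = ∏ k ∈ range t, qint (2*k+3) := by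
  rw [Finset.prod_range_succ']
  simp [qint_one]
  exact Finset.prod_congr rfl (fun k _ => by ring_nf)

lemma F_eq_G : ∀ m h t, m = h + 2*t → F m h = G h t := by
  intro m
  induction m with
  | zero =>
      intro h t hm
      have hh : h = 0 := by omega
      have ht : t = 0 := by omega
      subst hh; subst ht
      simp [F, G]
  | succ m ih =>
      intro h t hm
      rcases Nat.eq_zero_or_pos h with rfl | hp
      · -- h = 0, t = s+1
        obtain ⟨s, rfl⟩ : ∃ s, t = s + 1 := ⟨t - 1, by omega⟩
        have h1 : F m 1 = G 1 s := ih 1 s (by omega)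
        simp only [F, h1, qint_zero]
        rw [show (0:ℕ) - 1 = 0 from rfl]
        simp only [mul_zero, zero_mul, add_zero]
        rw [G, G]
        simp only [one_ne_zero, if_false, if_pos rfl]
        rw [prod_shift]
        simp [tri]
      · obtain ⟨h', rfl⟩ := Nat.exists_eq_add_of_lt hp
        rw [show 0 + h' + 1 = h' + 1 from by omega] at *
        rcases Nat.eq_zero_or_pos t with rfl | ht
        · -- t = 0 : m = h'
          have hmh : m = h' := by omega
          subst hmh
          have h1 : F m (m+1+1) = 0 := by
            apply F_eq_zero; rintro ⟨t, h⟩; omega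
          have h2 : F m m = G m 0 := ih m 0 (by omega)
          simp only [F, h1, zero_add, Nat.add_sub_cancel, h2]
          rcases Nat.eq_zero_or_pos m with rfl | hm0
          · simp [G, tri, qint_one]
          · obtain ⟨m', rfl⟩ := Nat.exists_eq_add_of_lt hm0
            rw [show 0 + m' + 1 = m' + 1 from by omega] at *
            rw [G, G]
            simp only [Nat.succ_ne_zero, if_false]
            simp only [Nat.add_sub_cancel]
            rw [show tri (m'+1+1) = tri (m'+1) + (m'+1) from rfl]
            rw [Finset.prod_range_succ]
            rw [show 2*0+2+m' = m'+1+1 from by omega]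
            rw [pow_add]
            ring
        · -- t = s+1
          obtain ⟨s, rfl⟩ : ∃ s, t = s + 1 := ⟨t - 1, by omega⟩
          have h1 : F m (h'+1+1) = G (h'+1+1) s := ih _ s (by omega)
          have h2 : F m h' = G h' (s+1) := ih _ (s+1) (by omega)
          simp only [F, h1, Nat.add_sub_cancel, h2]
          rcases Nat.eq_zero_or_pos h' with rfl | hh'
          · -- h = 1
            have g1 : G (0+1) (s+1) = (∏ k ∈ range s, qint (2*k+3)) * qint (2*s+3) := by
              rw [G]
              simp only [Nat.succ_ne_zero, if_false]
              rw [show tri (0+1) = 0 from rfl]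
              simp only [pow_zero, one_mul, Nat.add_sub_cancel, Finset.prod_range_zero,
                mul_one]
              rw [Finset.prod_range_succ]
            have g2 : G (0+1+1) s = X * ((∏ k ∈ range s, qint (2*k+3)) * qint (2*s+2)) := by
              rw [G]
              simp only [Nat.succ_ne_zero, if_false]
              rw [show tri (0+1+1) = 1 from rfl]
              rw [show (0+1+1:ℕ) - 1 = 1 from rfl]
              rw [Finset.prod_range_one, pow_one]
            have g0 : G 0 (s+1) = ∏ k ∈ range s, qint (2*k+3) := by
              rw [G]
              simp only [if_pos rfl]
              exact prod_shift s
            rw [g1, g2, g0]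
            rw [show (0:ℕ)+1 = 1 from rfl, qint_one, pow_zero]
            rw [show 2*s+3 = 1 + (2*s+2) from by omega, qint_add 1 (2*s+2), qint_one, pow_one]
            ring
          · -- h = h''+2
            obtain ⟨h'', rfl⟩ := Nat.exists_eq_add_of_lt hh'
            rw [show 0 + h'' + 1 = h'' + 1 from by omega] at *
            rw [G, G, G]
            simp only [Nat.succ_ne_zero, if_false]
            simp only [Nat.add_sub_cancel]
            rw [show tri (h''+1+1+1) = tri (h''+1+1) + (h''+1+1) from rfl]
            rw [show tri (h''+1+1) = tri (h''+1) + (h''+1) from rfl]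
            rw [Finset.prod_range_succ (fun k => qint (2*k+3)) s]
            rw [Finset.prod_range_succ (fun j => qint (2*(s+1)+2+j)) h'']
            rw [Finset.prod_range_succ' (fun j => qint (2*s+2+j)) (h''+1)]
            rw [Finset.prod_range_succ' (fun j => qint (2*s+2+(j+1))) h'']
            have e1 : ∀ j : ℕ, 2*s+2+(j+1+1) = 2*(s+1)+2+j := by intro j; omega
            simp only [e1]
            rw [show 2*(s+1)+2+h'' = (h''+1+1) + (2*s+2) from by omega]
            rw [qint_add (h''+1+1) (2*s+2)]
            rw [show 2*s+2+0 = 2*s+2 from by omega, show 2*s+2+(0+1) = 2*s+3 from by omega]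
            rw [pow_add, pow_add]
            ring

noncomputable def w : List Step → ℕ → Polynomial ℤ
  | [], h => if h = 0 then 1 else 0
  | (Step.U :: t), h => w t (h+1)
  | (Step.L :: _), _ => 0
  | (Step.D :: t), h => X ^ (h-1) * qint h * w t (h-1)

def dp : List Step → List ℕ
  | [] => []
  | (Step.U :: t) => (dp t).map (· + 1)
  | (Step.L :: t) => (dp t).map (· + 1)
  | (Step.D :: t) => 0 :: (dp t).map (· + 1)

def ok : List Step → ℕ → Prop
  | [], h => h = 0
  | (Step.U :: t), h => ok t (h+1)
  | (Step.L :: _), _ => False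
  | (Step.D :: t), h => 1 ≤ h ∧ ok t (h-1)

lemma step_univ : (Finset.univ : Finset Step) = {Step.U, Step.L, Step.D} := by
  ext s; cases s <;> simp

lemma sum_step {M : Type*} [AddCommMonoid M] (f : Step → M) :
    ∑ s : Step, f s = f Step.U + f Step.L + f Step.D := by
  rw [step_univ, Finset.sum_insert (by decide), Finset.sum_insert (by decide),
    Finset.sum_singleton]
  exact (add_assoc _ _ _).symm

lemma ofFn_cons (m : ℕ) (s : Step) (δ' : Fin m → Step) :
    List.ofFn (Fin.cons s δ') = s :: List.ofFn δ' := by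
  rw [List.ofFn_succ]
  simp

lemma sum_w (m : ℕ) : ∀ h, ∑ δ : Fin m → Step, w (List.ofFn δ) h = F m h := by
  induction m with
  | zero =>
      intro h
      rw [show F 0 h = if h = 0 then 1 else 0 from rfl]
      rw [Finset.sum_congr rfl (fun δ _ => by
        rw [List.ofFn_zero]
        rfl : ∀ δ ∈ (Finset.univ : Finset (Fin 0 → Step)), w (List.ofFn δ) h
          = if h = 0 then (1 : Polynomial ℤ) else 0)]
      rw [Finset.sum_const]
      norm_num
  | succ m ih =>
      intro h
      rw [← Fintype.sum_equiv (Fin.consEquiv (fun _ => Step))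
        (fun p : Step × (Fin m → Step) => w (List.ofFn ((Fin.consEquiv (fun _ => Step)) p)) h)
        (fun δ => w (List.ofFn δ) h) (fun p => rfl)]
      rw [Fintype.sum_prod_type]
      have hof : ∀ (s : Step) (δ' : Fin m → Step),
          w (List.ofFn ((Fin.consEquiv (fun _ => Step)) (s, δ'))) h = w (s :: List.ofFn δ') h := by
        intro s δ'
        rw [show ((Fin.consEquiv (fun _ => Step)) (s, δ')) = Fin.cons s δ' from rfl, ofFn_cons]
      simp only [hof]
      rw [sum_step (fun s => ∑ δ' : Fin m → Step, w (s :: List.ofFn δ') h)]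
      have eU : ∀ (l : List Step) h', w (Step.U :: l) h' = w l (h'+1) := fun _ _ => rfl
      have eL : ∀ (l : List Step) h', w (Step.L :: l) h' = 0 := fun _ _ => rfl
      have eD : ∀ (l : List Step) h', w (Step.D :: l) h'
          = X ^ (h'-1) * qint h' * w l (h'-1) := fun _ _ => rfl
      simp only [eU, eL, eD]
      rw [Finset.sum_const, ih, ← Finset.mul_sum, ih]
      rw [show F (m+1) h = F m (h+1) + X^(h-1) * qint h * F m (h-1) from rfl]
      simp

lemma w_nil (h : ℕ) : w [] h = if h = 0 then 1 else 0 := rfl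
lemma w_U (t : List Step) (h : ℕ) : w (Step.U :: t) h = w t (h+1) := rfl
lemma w_L (t : List Step) (h : ℕ) : w (Step.L :: t) h = 0 := rfl
lemma w_D (t : List Step) (h : ℕ) :
    w (Step.D :: t) h = X ^ (h-1) * qint h * w t (h-1) := rfl
lemma dp_nil : dp [] = [] := rfl
lemma dp_U (t : List Step) : dp (Step.U :: t) = (dp t).map (· + 1) := rfl
lemma dp_L (t : List Step) : dp (Step.L :: t) = (dp t).map (· + 1) := rfl
lemma dp_D (t : List Step) : dp (Step.D :: t) = 0 :: (dp t).map (· + 1) := rfl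

lemma w_zero : ∀ (l : List Step) (h : ℕ), ¬ ok l h → w l h = 0 := by
  intro l
  induction l with
  | nil =>
      intro h hn
      rw [w_nil, if_neg (show ¬ h = 0 from fun e => hn e)]
  | cons s t iht =>
      cases s with
      | U => intro h hn; rw [w_U]; exact iht (h+1) hn
      | L => intro h hn; rw [w_L]
      | D =>
          intro h hn
          rcases Nat.eq_zero_or_pos h with rfl | hp
          · rw [w_D]; simp [qint_zero]
          · rw [w_D]
            have : ¬ ok t (h-1) := fun o => hn ⟨hp, o⟩
            rw [iht _ this, mul_zero]

lemma getD_map_add_one (L : List ℕ) (i : ℕ) (hi : i < L.length) :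
    (L.map (· + 1)).getD i 0 = L.getD i 0 + 1 := by
  rw [List.getD_eq_getElem _ _ (by rwa [List.length_map]), List.getElem_map,
    List.getD_eq_getElem _ _ hi]

lemma w_eq_prod : ∀ (l : List Step) (h : ℕ), ok l h →
    w l h = ∏ i ∈ range (dp l).length,
      (X ^ (h + (dp l).getD i 0 - (2*i+1)) * qint (h + (dp l).getD i 0 - 2*i)) := by
  intro l
  induction l with
  | nil => intro h hk; rw [w_nil, if_pos (show h = 0 from hk), dp_nil]; simp
  | cons s t iht =>
      cases s with
      | L => intro h hk; exact hk.elim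
      | U =>
          intro h hk
          rw [w_U, iht (h+1) hk, dp_U, List.length_map]
          apply Finset.prod_congr rfl
          intro i hi
          rw [Finset.mem_range] at hi
          rw [getD_map_add_one _ _ hi]
          congr 1 <;> first
            | omega
            | (congr 1 <;> omega)
      | D =>
          intro h hk
          obtain ⟨hp, hok⟩ := hk
          rw [w_D, iht _ hok, dp_D, List.length_cons, List.length_map]
          rw [Finset.prod_range_succ']
          rw [mul_comm (X ^ (h-1) * qint h)]
          refine congr_arg₂ (· * ·) ?_ ?_
          · apply Finset.prod_congr rfl
            intro i hi
            rw [Finset.mem_range] at hi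
            rw [List.getD_cons_succ, getD_map_add_one _ _ hi]
            congr 1 <;> first
              | omega
              | (congr 1 <;> omega)
          · rw [List.getD_cons_zero]
            norm_num

lemma dp_lb : ∀ (l : List Step) (h : ℕ), ok l h →
    ∀ i, i < (dp l).length → 2*i+1 ≤ h + (dp l).getD i 0 := by
  intro l
  induction l with
  | nil => intro h _ i hi; rw [dp_nil] at hi; simp at hi
  | cons s t iht =>
      cases s with
      | L => intro h hk; exact hk.elim
      | U =>
          intro h hk i hi
          rw [dp_U, List.length_map] at hi
          rw [dp_U, getD_map_add_one _ _ hi]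
          have := iht (h+1) hk i hi
          omega
      | D =>
          intro h hk i hi
          obtain ⟨hp, hok⟩ := hk
          rw [dp_D, List.length_cons, List.length_map] at hi
          rw [dp_D]
          cases i with
          | zero => rw [List.getD_cons_zero]; omega
          | succ i =>
              have hi' : i < (dp t).length := by omega
              rw [List.getD_cons_succ, getD_map_add_one _ _ hi']
              have := iht (h-1) hok i hi'
              omega

lemma mem_map_add_one (L : List ℕ) (p : ℕ) :
    p ∈ L.map (· + 1) ↔ (1 ≤ p ∧ (p-1) ∈ L) := by
  rw [List.mem_map]
  constructor
  · rintro ⟨q, hq, rfl⟩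
    exact ⟨by omega, by simpa using hq⟩
  · rintro ⟨h1, h2⟩
    exact ⟨p-1, h2, by omega⟩

lemma dp_mem : ∀ (l : List Step) (p : ℕ),
    p ∈ dp l ↔ (p < l.length ∧ l.getD p Step.U = Step.D) := by
  intro l
  induction l with
  | nil => intro p; rw [dp_nil]; simp
  | cons s t iht =>
      intro p
      cases s with
      | U =>
          rw [dp_U, mem_map_add_one, iht]
          cases p with
          | zero => simp
          | succ p =>
              simp only [Nat.add_sub_cancel, List.length_cons, List.getD_cons_succ]
              constructor
              · rintro ⟨-, h1, h2⟩
                exact ⟨by omega, h2⟩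
              · rintro ⟨h1, h2⟩
                exact ⟨by omega, by omega, h2⟩
      | L =>
          rw [dp_L, mem_map_add_one, iht]
          cases p with
          | zero => simp
          | succ p =>
              simp only [Nat.add_sub_cancel, List.length_cons, List.getD_cons_succ]
              constructor
              · rintro ⟨-, h1, h2⟩
                exact ⟨by omega, h2⟩
              · rintro ⟨h1, h2⟩
                exact ⟨by omega, by omega, h2⟩
      | D =>
          rw [dp_D]
          cases p with
          | zero => simp
          | succ p =>
              rw [List.mem_cons, mem_map_add_one, iht]
              simp only [Nat.add_sub_cancel, List.length_cons, List.getD_cons_succ]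
              constructor
              · rintro (e | ⟨-, h1, h2⟩)
                · exact absurd e (by omega)
                · exact ⟨by omega, h2⟩
              · rintro ⟨h1, h2⟩
                exact Or.inr ⟨by omega, by omega, h2⟩

lemma count_take (m : ℕ) : ∀ (δ : Fin m → Step) (s : Step) (K : ℕ),
    ((List.ofFn δ).take K).count s
      = ∑ j : Fin m, if (j.1 < K ∧ δ j = s) then 1 else 0 := by
  induction m with
  | zero => intro δ s K; rw [List.ofFn_zero]; simp
  | succ m ih =>
      intro δ s K
      rw [List.ofFn_succ, Fin.sum_univ_succ]
      cases K with
      | zero => simp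
      | succ K =>
          rw [List.take_succ_cons, List.count_cons, ih (fun i => δ i.succ) s K]
          simp only [beq_iff_eq, Fin.val_succ, Fin.val_zero, Nat.add_lt_add_iff_right,
            Nat.succ_pos, true_and]
          exact add_comm _ _

lemma card_eq_count (m : ℕ) (δ : Fin m → Step) (s : Step) (K : ℕ) :
    (Finset.univ.filter (fun j : Fin m => j.1 < K ∧ δ j = s)).card
      = ((List.ofFn δ).take K).count s := by
  rw [Finset.card_filter, count_take]

lemma card_eq_count_all (m : ℕ) (δ : Fin m → Step) (s : Step) :
    (Finset.univ.filter (fun j : Fin m => δ j = s)).card = (List.ofFn δ).count s := by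
  have h1 : (List.ofFn δ).count s = ((List.ofFn δ).take m).count s := by
    rw [List.take_of_length_le (le_of_eq (List.length_ofFn (f := δ)))]
  rw [h1, Finset.card_filter, count_take]
  exact Finset.sum_congr rfl (fun j _ => by simp [j.isLt])

lemma ok_iff : ∀ (l : List Step) (h : ℕ), ok l h ↔
    (Step.L ∉ l ∧ l.count Step.D = l.count Step.U + h ∧
      ∀ K, (l.take K).count Step.D ≤ (l.take K).count Step.U + h) := by
  intro l
  induction l with
  | nil =>
      intro h
      constructor
      · intro hk
        refine ⟨by simp, by simp [show h = 0 from hk], fun K => by simp⟩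
      · rintro ⟨-, hc, -⟩
        simp at hc
        exact hc.symm
  | cons s t iht =>
      intro h
      cases s with
      | L =>
          constructor
          · intro hk; exact hk.elim
          · rintro ⟨hL, -, -⟩
            exact absurd List.mem_cons_self hL
      | U =>
          rw [show ok (Step.U :: t) h = ok t (h+1) from rfl, iht (h+1)]
          have cD : ∀ r : List Step, (Step.U :: r).count Step.D = r.count Step.D := by
            intro r; simp
          have cU : ∀ r : List Step, (Step.U :: r).count Step.U = r.count Step.U + 1 := by
            intro r; simp
          constructor
          · rintro ⟨hL, hc, hp⟩
            refine ⟨?_, by rw [cD, cU]; omega, ?_⟩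
            · intro hmem
              rcases List.mem_cons.1 hmem with e | hm
              · exact Step.noConfusion e
              · exact hL hm
            · intro K
              cases K with
              | zero => simp
              | succ K =>
                  have := hp K
                  rw [List.take_succ_cons, cD, cU]
                  omega
          · rintro ⟨hL, hc, hp⟩
            rw [cD, cU] at hc
            refine ⟨fun hm => hL (List.mem_cons_of_mem _ hm), by omega, ?_⟩
            intro K
            have := hp (K+1)
            rw [List.take_succ_cons, cD, cU] at this
            omega
      | D =>
          rw [show ok (Step.D :: t) h = (1 ≤ h ∧ ok t (h-1)) from rfl]
          have cD : ∀ r : List Step, (Step.D :: r).count Step.D = r.count Step.D + 1 := by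
            intro r; simp
          have cU : ∀ r : List Step, (Step.D :: r).count Step.U = r.count Step.U := by
            intro r; simp
          constructor
          · rintro ⟨hp1, hok⟩
            rw [iht (h-1)] at hok
            obtain ⟨hL, hc, hp⟩ := hok
            refine ⟨?_, by rw [cD, cU]; omega, ?_⟩
            · intro hmem
              rcases List.mem_cons.1 hmem with e | hm
              · exact Step.noConfusion e
              · exact hL hm
            · intro K
              cases K with
              | zero => simp
              | succ K =>
                  have := hp K
                  rw [List.take_succ_cons, cD, cU]
                  omega
          · rintro ⟨hL, hc, hp⟩
            rw [cD, cU] at hc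
            have hp1 : 1 ≤ h := by
              have := hp 1
              rw [List.take_succ_cons] at this
              rw [cD, cU] at this
              simp at this
              omega
            refine ⟨hp1, ?_⟩
            rw [iht (h-1)]
            refine ⟨fun hm => hL (List.mem_cons_of_mem _ hm), by omega, ?_⟩
            intro K
            have := hp (K+1)
            rw [List.take_succ_cons, cD, cU] at this
            omega

lemma filter_le_eq (m : ℕ) (δ : Fin m → Step) (s : Step) (K : ℕ) (hK : K < m) :
    (Finset.univ.filter (fun j : Fin m => j ≤ ⟨K, hK⟩ ∧ δ j = s)).card
      = ((List.ofFn δ).take (K+1)).count s := by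
  rw [← card_eq_count]
  congr 1
  apply Finset.filter_congr
  intro j _
  have hiff : j ≤ (⟨K, hK⟩ : Fin m) ↔ j.1 < K+1 := by
    have hK' : ((⟨K, hK⟩ : Fin m) : ℕ) = K := rfl
    rw [Fin.le_def, hK']
    omega
  rw [hiff]

lemma dyck_iff_ok (m : ℕ) (δ : Fin m → Step) : IsDyck δ ↔ ok (List.ofFn δ) 0 := by
  rw [ok_iff]
  constructor
  · rintro ⟨⟨hpre, htot⟩, hL⟩
    refine ⟨?_, ?_, ?_⟩
    · intro hmem
      rw [List.mem_ofFn] at hmem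
      obtain ⟨i, hi⟩ := hmem
      exact hL i hi
    · rw [Nat.add_zero, ← card_eq_count_all, ← card_eq_count_all]
      exact htot.symm
    · intro K
      rcases le_or_gt K m with hK | hK
      · cases K with
        | zero => simp
        | succ K =>
            have hk : K < m := by omega
            have h1 := filter_le_eq m δ Step.D K hk
            have h2 := filter_le_eq m δ Step.U K hk
            rw [← h1, ← h2, Nat.add_zero]
            exact hpre ⟨K, hk⟩
      · rw [List.take_of_length_le (by rw [List.length_ofFn]; omega)]
        rw [Nat.add_zero, ← card_eq_count_all, ← card_eq_count_all]
        exact le_of_eq htot.symm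
  · rintro ⟨hL, hc, hp⟩
    refine ⟨⟨?_, ?_⟩, ?_⟩
    · intro k
      have hk := hp (k.1 + 1)
      rw [← filter_le_eq m δ Step.D k.1 k.isLt, ← filter_le_eq m δ Step.U k.1 k.isLt,
        Nat.add_zero] at hk
      simpa only [Fin.eta] using hk
    · rw [Nat.add_zero] at hc
      rw [card_eq_count_all, card_eq_count_all]
      exact hc.symm
    · intro i hi
      apply hL
      rw [List.mem_ofFn]
      exact ⟨i, hi⟩

lemma dp_sorted : ∀ l : List Step, List.Pairwise (· < ·) (dp l) := by
  intro l
  induction l with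
  | nil => rw [dp_nil]; exact List.Pairwise.nil
  | cons s t iht =>
      have hmap : List.Pairwise (· < ·) ((dp t).map (· + 1)) :=
        List.Pairwise.map _ (fun a b h => by omega) iht
      cases s with
      | U => rw [dp_U]; exact hmap
      | L => rw [dp_L]; exact hmap
      | D =>
          rw [dp_D, List.pairwise_cons]
          refine ⟨?_, hmap⟩
          intro b hb
          rw [mem_map_add_one] at hb
          omega

lemma dp_nodup (l : List Step) : (dp l).Nodup :=
  (dp_sorted l).imp (fun h => Nat.ne_of_lt h)

lemma dp_ofFn (m : ℕ) (δ : Fin m → Step) :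
    dp (List.ofFn δ)
      = ((Finset.univ.filter (fun j : Fin m => δ j = Step.D)).sort (· ≤ ·)).map Fin.val := by
  haveI : Std.Antisymm (α := ℕ) (· < ·) := ⟨fun a b h1 h2 => absurd h2 (Nat.lt_asymm h1)⟩
  apply fun hp hs => List.Perm.eq_of_pairwise' (dp_sorted _) hs hp
  · apply List.perm_of_nodup_nodup_toFinset_eq (dp_nodup _)
    · exact (Finset.sort_nodup _ _).map Fin.val_injective
    · ext p
      rw [List.mem_toFinset, List.mem_toFinset, dp_mem, List.mem_map]
      constructor
      · rintro ⟨hlt, hget⟩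
        rw [List.length_ofFn] at hlt
        refine ⟨⟨p, hlt⟩, ?_, rfl⟩
        rw [Finset.mem_sort, Finset.mem_filter]
        refine ⟨Finset.mem_univ _, ?_⟩
        rw [List.getD_eq_getElem _ _ (by rw [List.length_ofFn]; exact hlt),
          List.getElem_ofFn] at hget
        exact hget
      · rintro ⟨j, hj, rfl⟩
        rw [Finset.mem_sort, Finset.mem_filter] at hj
        refine ⟨by rw [List.length_ofFn]; exact j.isLt, ?_⟩
        rw [List.getD_eq_getElem _ _ (by rw [List.length_ofFn]; exact j.isLt),
          List.getElem_ofFn]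
        simpa only [Fin.eta] using hj.2
  · exact List.Pairwise.map _ (fun a b h => Fin.lt_def.mp h) (Finset.sortedLT_sort _).pairwise

lemma dyck_card (n : ℕ) (δ : Fin (2*n) → Step) (hd : IsDyck δ) :
    (Finset.univ.filter (fun j => δ j = Step.D)).card = n := by
  obtain ⟨⟨-, htot⟩, hL⟩ := hd
  have h3 : ∀ j, ((if δ j = Step.U then 1 else 0) : ℕ)
      + (if δ j = Step.D then 1 else 0) = 1 := by
    intro j
    rcases hj : δ j with _ | _ | _
    · simp [hj]
    · exact absurd hj (hL j)
    · simp [hj]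
  have hsum : (Finset.univ.filter (fun j => δ j = Step.U)).card
      + (Finset.univ.filter (fun j => δ j = Step.D)).card = 2*n := by
    rw [Finset.card_filter, Finset.card_filter, ← Finset.sum_add_distrib]
    rw [Finset.sum_congr rfl (fun j _ => h3 j)]
    simp
  omega

lemma dyck_weight (n : ℕ) (δ : Fin (2*n) → Step) (hd : IsDyck δ) :
    (∏ i ∈ Finset.range n,
      (X : Polynomial ℤ) ^ (dpos δ i - 2 * (i + 1)) * qint (dpos δ i - 2 * (i + 1) + 1))
    = w (List.ofFn δ) 0 := by
  have hok : ok (List.ofFn δ) 0 := (dyck_iff_ok _ δ).1 hd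
  rw [w_eq_prod _ 0 hok]
  have hlen : (dp (List.ofFn δ)).length = n := by
    rw [dp_ofFn, List.length_map, Finset.length_sort, dyck_card n δ hd]
  rw [hlen]
  apply Finset.prod_congr rfl
  intro i hi
  rw [Finset.mem_range] at hi
  have hi' : i < (dp (List.ofFn δ)).length := by rw [hlen]; exact hi
  have hdpos : dpos δ i = (dp (List.ofFn δ)).getD i 0 + 1 := by
    have hmm : (((Finset.univ.filter (fun j : Fin (2*n) => δ j = Step.D)).sort (· ≤ ·)).map
        (fun j => (j : ℕ) + 1)) = (dp (List.ofFn δ)).map (· + 1) := by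
      have hfl : ∀ l : List (Fin (2*n)), (do let a ← l; pure (a : ℕ) : List ℕ) = l.map Fin.val := by
        intro l
        induction l with
        | nil => rfl
        | cons a t ih => exact congrArg (List.cons (a : ℕ)) ih
      rw [hfl, ← dp_ofFn]
    simp only [dpos]
    rw [hmm, getD_map_add_one _ _ hi']
  have hlb := dp_lb (List.ofFn δ) 0 hok i hi'
  rw [hdpos]
  refine congr_arg₂ (· * ·) ?_ ?_
  · congr 1
    omega
  · congr 1
    omega

end Watson

/-- Watson's identity:
`Σ_{δ ∈ D_{2n}} ∏_{i=1}^n q^{d_i(δ) - 2i} [d_i(δ) - 2i + 1]_q = ∏_{k=1}^n [2k-1]_q`. -/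
theorem watson_identity (n : ℕ) :
    ∑ δ ∈ Finset.univ.filter (fun δ : Fin (2 * n) → Step => IsDyck δ),
      ∏ i ∈ Finset.range n,
        (X : Polynomial ℤ) ^ (dpos δ i - 2 * (i + 1))
          * qint (dpos δ i - 2 * (i + 1) + 1)
    = ∏ k ∈ Finset.range n, qint (2 * k + 1) := by
  rw [Finset.sum_congr rfl (fun δ hδ =>
    Watson.dyck_weight n δ (Finset.mem_filter.1 hδ).2)]
  have h2 : ∑ δ ∈ Finset.univ.filter (fun δ : Fin (2 * n) → Step => IsDyck δ),
      Watson.w (List.ofFn δ) 0 = ∑ δ : Fin (2*n) → Step, Watson.w (List.ofFn δ) 0 := by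
    rw [← Finset.sum_filter_add_sum_filter_not Finset.univ
      (fun δ : Fin (2 * n) → Step => IsDyck δ) (fun δ => Watson.w (List.ofFn δ) 0)]
    have h0 : ∑ δ ∈ Finset.univ.filter
        (fun δ : Fin (2 * n) → Step => ¬ IsDyck δ), Watson.w (List.ofFn δ) 0 = 0 :=
      Finset.sum_eq_zero (fun δ hδ => Watson.w_zero _ _
        (fun o => (Finset.mem_filter.1 hδ).2 ((Watson.dyck_iff_ok _ δ).2 o)))
    rw [h0, add_zero]
  rw [h2, Watson.sum_w, Watson.F_eq_G (2*n) 0 n (by ring), Watson.G]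
  simp
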